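/- Let Δ ≥ 3 and define the 2^{Δ-1} × 2^{Δ-1} real symmetric matrix V by V_{x,y} = -1 if the binary strings of x and y (of length Δ-1) differ in all Δ-1 positions, V_{x,y} = 1 if they differ in exactly one position, and V_{x,y} = 0 otherwise. Then for every y ∈ {0,...,2^{Δ-1}-1}, the column of the matrix P_{Δ-1} (with entries (P)_{x,y} = (-1)^{x·y}) indexed by y is an eigenvector of V with eigenvalue λ_y = Σ_{k=1}^{Δ-1} (-1)^{y_k} - (-1)^{Σ_k y_k}. -/

import Mathlib

set_option maxHeartbeats 1000000

private lemma prod_sign' (s : Finset ℕ) (p : ℕ → Prop) [DecidablePred p] :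
    ∏ j ∈ s, (if p j then (-1:ℝ) else 1) = (-1 : ℝ) ^ (s.filter p).card := by
  rw [Finset.prod_ite]
  simp

private lemma flip_eq₁ {a b : Bool} (h : ¬ a = b) : b = (a ^^ true) := by
  cases a <;> cases b <;> simp_all

private lemma flip_eq₂ {a b : Bool} (h : ¬ a = b) : (a ^^ true) = b := by
  cases a <;> cases b <;> simp_all

private lemma xor_true_ne (a : Bool) : ¬ a = (a ^^ true) := by
  cases a <;> simp

theorem V_eigenvectors (Δ : ℕ) (hΔ : 3 ≤ Δ)
    (V : Matrix (Fin (2 ^ (Δ - 1))) (Fin (2 ^ (Δ - 1))) ℝ)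
    (hV : ∀ x y : Fin (2 ^ (Δ - 1)),
      V x y =
        if ((Finset.range (Δ - 1)).filter
            (fun k => (x : ℕ).testBit k ≠ (y : ℕ).testBit k)).card = Δ - 1 then -1
        else if ((Finset.range (Δ - 1)).filter
            (fun k => (x : ℕ).testBit k ≠ (y : ℕ).testBit k)).card = 1 then 1
        else 0) :
    ∀ y : Fin (2 ^ (Δ - 1)),
      V.mulVec (fun x => (-1 : ℝ) ^ (((Finset.range (Δ - 1)).filter
          (fun k => (x : ℕ).testBit k ∧ (y : ℕ).testBit k)).card)) =
        ((∑ k ∈ Finset.range (Δ - 1), (-1 : ℝ) ^ (if (y : ℕ).testBit k then 1 else 0)) -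
            (-1 : ℝ) ^ (((Finset.range (Δ - 1)).filter
              (fun k => (y : ℕ).testBit k)).card)) •
          (fun x : Fin (2 ^ (Δ - 1)) => (-1 : ℝ) ^ (((Finset.range (Δ - 1)).filter
            (fun k => (x : ℕ).testBit k ∧ (y : ℕ).testBit k)).card)) := by
  have hn2' : 2 ≤ Δ - 1 := by omega
  revert hn2' hV V
  generalize Δ - 1 = n
  intro V hV hn2 y
  have h2n : (0:ℕ) < 2 ^ n := Nat.pow_pos (by norm_num)
  set v : Fin (2 ^ n) → ℝ := fun z =>
    (-1 : ℝ) ^ (((Finset.range n).filter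
      (fun k => (z : ℕ).testBit k ∧ (y : ℕ).testBit k)).card) with hvdef
  funext x
  have hvprod : ∀ z : Fin (2 ^ n),
      v z = ∏ j ∈ Finset.range n,
        (if (z : ℕ).testBit j ∧ (y : ℕ).testBit j then (-1:ℝ) else 1) := by
    intro z; rw [hvdef, prod_sign']
  have hhigh : ∀ (z : Fin (2 ^ n)) (j : ℕ), n ≤ j → ((z : ℕ)).testBit j = false := by
    intro z j hj
    exact Nat.testBit_lt_two_pow
      (lt_of_lt_of_le z.isLt (Nat.pow_le_pow_right (by norm_num) hj))
  -- complement
  have hsub : 2 ^ n - 1 < 2 ^ n := Nat.sub_lt h2n one_pos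
  set c : Fin (2 ^ n) := ⟨(x : ℕ) ^^^ (2 ^ n - 1), Nat.xor_lt_two_pow x.isLt hsub⟩
    with hcdef
  have hcbit : ∀ j, ((c : ℕ)).testBit j = ((x:ℕ).testBit j ^^ decide (j < n)) := by
    intro j; simp [hcdef, Nat.testBit_xor, Nat.testBit_two_pow_sub_one]
  -- flips
  set f : ℕ → Fin (2 ^ n) := fun k =>
    ⟨(x : ℕ) ^^^ 2 ^ min k (n - 1),
      Nat.xor_lt_two_pow x.isLt
        (Nat.pow_lt_pow_right one_lt_two (by omega))⟩ with hfdef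
  have hfbit : ∀ k j,
      ((f k : ℕ)).testBit j = ((x:ℕ).testBit j ^^ decide (min k (n-1) = j)) := by
    intro k j; simp [hfdef, Nat.testBit_xor, Nat.testBit_two_pow]
  set D : Fin (2 ^ n) → ℕ := fun z =>
    ((Finset.range n).filter (fun k => (x : ℕ).testBit k ≠ (z : ℕ).testBit k)).card
    with hDdef
  -- Claim A : distance n ↔ complement
  have hA : (Finset.univ.filter (fun z : Fin (2 ^ n) => D z = n)) = {c} := by
    ext z
    simp only [Finset.mem_filter, Finset.mem_univ, true_and, Finset.mem_singleton]
    constructor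
    · intro hd
      have hd' : ((Finset.range n).filter
          (fun k => (x:ℕ).testBit k ≠ (z:ℕ).testBit k)).card = n := hd
      have hfull : ((Finset.range n).filter
          (fun k => (x:ℕ).testBit k ≠ (z:ℕ).testBit k)) = Finset.range n := by
        apply Finset.eq_of_subset_of_card_le (Finset.filter_subset _ _)
        exact le_of_eq (by rw [Finset.card_range, hd'])
      have hdiff : ∀ k < n, (x:ℕ).testBit k ≠ (z:ℕ).testBit k := by
        intro k hk
        have hmem : k ∈ Finset.range n := Finset.mem_range.mpr hk
        rw [← hfull] at hmem
        exact (Finset.mem_filter.mp hmem).2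
      apply Fin.ext
      apply Nat.eq_of_testBit_eq
      intro j
      rcases lt_or_ge j n with hj | hj
      · have hne := hdiff j hj
        have hdj : decide (j < n) = true := by simp [hj]
        rw [hcbit, hdj]
        exact flip_eq₁ hne
      · have hdj : decide (j < n) = false := by simp [Nat.not_lt.mpr hj]
        rw [hhigh z j hj, hcbit, hdj, Bool.xor_false, hhigh x j hj]
    · rintro rfl
      have hfull : ((Finset.range n).filter
          (fun k => (x:ℕ).testBit k ≠ (c:ℕ).testBit k)) = Finset.range n := by
        rw [Finset.filter_eq_self]
        intro k hk
        have hdj : decide (k < n) = true := by simp [Finset.mem_range.mp hk]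
        rw [hcbit, hdj]
        exact xor_true_ne _
      have hrfl : D c = ((Finset.range n).filter
          (fun k => (x:ℕ).testBit k ≠ (c:ℕ).testBit k)).card := rfl
      rw [hrfl, hfull, Finset.card_range]
  -- Claim B : distance 1 ↔ single flip
  have hB : (Finset.univ.filter (fun z : Fin (2 ^ n) => D z = 1)) =
      (Finset.range n).image f := by
    ext z
    simp only [Finset.mem_filter, Finset.mem_univ, true_and, Finset.mem_image,
      Finset.mem_range]
    constructor
    · intro hd
      have hd' : ((Finset.range n).filter
          (fun k => (x:ℕ).testBit k ≠ (z:ℕ).testBit k)).card = 1 := hd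
      obtain ⟨k, hk⟩ := Finset.card_eq_one.mp hd'
      have hkmem : k ∈ ((Finset.range n).filter
          (fun j => (x:ℕ).testBit j ≠ (z:ℕ).testBit j)) := by
        rw [hk]; exact Finset.mem_singleton_self k
      have hkn : k < n := Finset.mem_range.mp (Finset.mem_filter.mp hkmem).1
      refine ⟨k, hkn, ?_⟩
      have hmin : min k (n-1) = k := by omega
      apply Fin.ext
      apply Nat.eq_of_testBit_eq
      intro j
      rw [hfbit, hmin]
      rcases eq_or_ne j k with rfl | hjk
      · have hdj : decide (j = j) = true := by simp
        rw [hdj]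
        exact flip_eq₂ (Finset.mem_filter.mp hkmem).2
      · have hkj : ¬ k = j := fun h => hjk h.symm
        have hdk : decide (k = j) = false := by simp [hkj]
        rw [hdk, Bool.xor_false]
        rcases lt_or_ge j n with hj | hj
        · have hnm : j ∉ ((Finset.range n).filter
              (fun i => (x:ℕ).testBit i ≠ (z:ℕ).testBit i)) := by
            rw [hk]; simp [hjk]
          by_contra h
          exact hnm (Finset.mem_filter.mpr ⟨Finset.mem_range.mpr hj, h⟩)
        · rw [hhigh z j hj, hhigh x j hj]
    · rintro ⟨k, hkn, rfl⟩
      have hmin : min k (n-1) = k := by omega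
      have hfilter : ((Finset.range n).filter
          (fun j => (x:ℕ).testBit j ≠ ((f k : ℕ)).testBit j)) = {k} := by
        ext j
        simp only [Finset.mem_filter, Finset.mem_range, Finset.mem_singleton]
        constructor
        · rintro ⟨hj, hne⟩
          by_contra hjk
          apply hne
          have hkj : ¬ k = j := fun h => hjk h.symm
          have hdk : decide (min k (n-1) = j) = false := by simp [hmin, hkj]
          rw [hfbit, hdk, Bool.xor_false]
        · rintro rfl
          refine ⟨hkn, ?_⟩
          have hdk : decide (min j (n-1) = j) = true := by simp [hmin]
          rw [hfbit, hdk]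
          exact xor_true_ne _
      have hrfl : D (f k) = ((Finset.range n).filter
          (fun j => (x:ℕ).testBit j ≠ ((f k : ℕ)).testBit j)).card := rfl
      rw [hrfl, hfilter, Finset.card_singleton]
  -- injectivity of f on range n
  have hinj : ∀ a ∈ Finset.range n, ∀ b ∈ Finset.range n, f a = f b → a = b := by
    intro a ha b hb hfe
    have ha' := Finset.mem_range.mp ha
    have hb' := Finset.mem_range.mp hb
    have h1 : (x:ℕ) ^^^ 2 ^ min a (n-1) = (x:ℕ) ^^^ 2 ^ min b (n-1) := by
      have := congrArg (fun w : Fin (2^n) => (w : ℕ)) hfe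
      simpa [hfdef] using this
    have h2 : (2:ℕ) ^ min a (n-1) = 2 ^ min b (n-1) := by
      have := congrArg (fun w => (x:ℕ) ^^^ w) h1
      simpa [Nat.xor_xor_cancel_left] using this
    have h3 := Nat.pow_right_injective (le_refl 2) h2
    omega
  -- value at a flip
  have hflipval : ∀ k < n, v (f k) = (if (y:ℕ).testBit k then (-1:ℝ) else 1) * v x := by
    intro k hkn
    have hmin : min k (n-1) = k := by omega
    rw [hvprod, hvprod]
    rw [Finset.prod_congr rfl
      (g := fun j => (if j = k then (if (y:ℕ).testBit k then (-1:ℝ) else 1) else 1) *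
        (if (x:ℕ).testBit j ∧ (y:ℕ).testBit j then (-1:ℝ) else 1)) ?_]
    · rw [Finset.prod_mul_distrib, Finset.prod_ite_eq']
      simp [Finset.mem_range.mpr hkn]
    · intro j hj
      rw [hfbit, hmin]
      rcases eq_or_ne j k with rfl | hjk
      · have hdj : decide (j = j) = true := by simp
        rw [hdj]
        by_cases hy : (y:ℕ).testBit j <;> cases hx : (x:ℕ).testBit j <;>
          simp [hy, hx]
      · have hkj : ¬ k = j := fun h => hjk h.symm
        have hdk : decide (k = j) = false := by simp [hkj]
        rw [hdk, Bool.xor_false]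
        simp [hjk]
  -- value at the complement
  have hcompval : v c =
      (-1:ℝ) ^ (((Finset.range n).filter (fun k => (y:ℕ).testBit k)).card) * v x := by
    rw [hvprod, hvprod, ← prod_sign', ← Finset.prod_mul_distrib]
    apply Finset.prod_congr rfl
    intro j hj
    have hdj : decide (j < n) = true := by simp [Finset.mem_range.mp hj]
    rw [hcbit, hdj]
    by_cases hy : (y:ℕ).testBit j <;> cases hx : (x:ℕ).testBit j <;> simp [hy, hx]
  -- main computation
  have hDz : ∀ z : Fin (2 ^ n),
      (((Finset.range n).filter (fun k => (x:ℕ).testBit k ≠ (z:ℕ).testBit k)).card) = D z :=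
    fun z => rfl
  have hmv : V.mulVec v x = ∑ z : Fin (2 ^ n), V x z * v z := by
    simp [Matrix.mulVec, dotProduct]
  rw [hmv]
  have hsplit : ∀ z : Fin (2 ^ n), V x z * v z =
      (if D z = 1 then v z else 0) - (if D z = n then v z else 0) := by
    intro z
    rw [hV x z, hDz z]
    have hne : n ≠ 1 := by omega
    have hne' : (1:ℕ) ≠ n := by omega
    by_cases h1 : D z = n
    · have h2 : D z ≠ 1 := by omega
      simp [h1, h2, hne, hne']
    · by_cases h2 : D z = 1
      · simp [h1, h2, hne']
      · simp [h1, h2]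
  rw [Finset.sum_congr rfl (fun z _ => hsplit z), Finset.sum_sub_distrib,
    ← Finset.sum_filter, ← Finset.sum_filter, hA, hB, Finset.sum_image hinj,
    Finset.sum_singleton]
  rw [Finset.sum_congr rfl (fun k hk => hflipval k (Finset.mem_range.mp hk)), hcompval]
  have hpowif : ∀ k, (-1:ℝ) ^ (if (y:ℕ).testBit k then 1 else 0) =
      (if (y:ℕ).testBit k then (-1:ℝ) else 1) := by
    intro k; split <;> simp
  simp only [Pi.smul_apply, smul_eq_mul, hpowif]
  rw [← Finset.sum_mul]
  ring
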